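/- Let c : V × V → W be a normal 2-cocycle between F₂-vector spaces (with trivial action). Then the map q_c : V → W defined by q_c(x) = c(x,x) is a quadratic map. -/

import Mathlib

/-- If `c : V × V → W` is a normal 2-cocycle between `F₂`-vector spaces (trivial
action), then `q_c(x) = c(x,x)` is a quadratic map: `q_c(αv) = α² q_c(v)` and the
polar map `b(v,w) = q_c(v+w) - q_c(v) - q_c(w)` is bilinear. -/
theorem quadratic_map_of_normal_two_cocycle
    (V W : Type*) [AddCommGroup V] [Module (ZMod 2) V] [AddCommGroup W] [Module (ZMod 2) W]
    (c : V → V → W)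
    (hcocycle : ∀ v₁ v₂ v₃ : V,
      c v₂ v₃ - c (v₁ + v₂) v₃ + c v₁ (v₂ + v₃) - c v₁ v₂ = 0)
    (hnorm_right : ∀ v : V, c v 0 = 0) (hnorm_left : ∀ v : V, c 0 v = 0) :
    (∀ (α : ZMod 2) (v : V), c (α • v) (α • v) = (α ^ 2) • c v v) ∧
    (∀ v v' w : V,
      (c (v + v' + w) (v + v' + w) - c (v + v') (v + v') - c w w) =
        (c (v + w) (v + w) - c v v - c w w) + (c (v' + w) (v' + w) - c v' v' - c w w)) ∧
    (∀ v w w' : V,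
      (c (v + (w + w')) (v + (w + w')) - c v v - c (w + w') (w + w')) =
        (c (v + w) (v + w) - c v v - c w w) + (c (v + w') (v + w') - c v v - c w' w')) ∧
    (∀ (α : ZMod 2) (v w : V),
      (c (α • v + w) (α • v + w) - c (α • v) (α • v) - c w w) =
        α • (c (v + w) (v + w) - c v v - c w w)) ∧
    (∀ (α : ZMod 2) (v w : V),
      (c (v + α • w) (v + α • w) - c v v - c (α • w) (α • w)) =
        α • (c (v + w) (v + w) - c v v - c w w)) := by
  have hV2 : ∀ x : V, x + x = 0 := fun x => by
    rw [← two_smul (ZMod 2) x, show (2 : ZMod 2) = 0 from rfl, zero_smul]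
  have hW2 : ∀ x : W, x + x = 0 := fun x => by
    rw [← two_smul (ZMod 2) x, show (2 : ZMod 2) = 0 from rfl, zero_smul]
  have hZ2 : ∀ x : W, (2 : ℤ) • x = 0 := fun x => by rw [two_smul]; exact hW2 x
  have hZ3 : ∀ x : W, (3 : ℤ) • x = x := fun x => by
    rw [show (3:ℤ) = 2 + 1 by norm_num, add_smul, hZ2, one_smul, zero_add]
  have hZ4 : ∀ x : W, (4 : ℤ) • x = 0 := fun x => by
    rw [show (4:ℤ) = 2 + 2 by norm_num, add_smul, hZ2, zero_add]
  have hneg : ∀ x : W, -x = x := fun x => neg_eq_of_add_eq_zero_left (hW2 x)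
  have heq : ∀ a b : W, a + b = 0 → a = b := fun a b h => by
    rw [← neg_eq_of_add_eq_zero_left h, hneg]
  -- additive form of the cocycle identity
  have hc : ∀ a b d : V, c b d + c (a + b) d + c a (b + d) + c a b = 0 := fun a b d => by
    have h := hcocycle a b d
    rwa [sub_eq_add_neg, sub_eq_add_neg, hneg, hneg] at h
  -- two expansion rules
  have hA : ∀ a b d : V, c (a + b) d = c b d + c a (b + d) + c a b := by
    intro a b d
    apply heq
    rw [← hc a b d]
    abel
  have hB : ∀ a b d : V, c a (b + d) = c b d + c (a + b) d + c a b := by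
    intro a b d
    apply heq
    rw [← hc a b d]
    abel
  -- polarization: q(x+y) = q x + q y + c x y + c y x
  have hq : ∀ x y : V, c (x + y) (x + y) = c x x + c y y + c x y + c y x := by
    intro x y
    rw [hA x y (x + y), show y + (x + y) = x by rw [add_comm x y, ← add_assoc, hV2, zero_add],
      hB y x y, add_comm y x, hA x y y, hV2 y, hnorm_right]
    abel_nf
    simp only [hZ2, hZ3, hZ4, zero_add, add_zero, smul_zero]
    try abel
  refine ⟨?_, ?_, ?_, ?_, ?_⟩
  · intro α v
    fin_cases α
    · exact (by simp [hnorm_left] : c ((0 : ZMod 2) • v) ((0 : ZMod 2) • v) = ((0 : ZMod 2) ^ 2) • c v v)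
    · exact (by simp : c ((1 : ZMod 2) • v) ((1 : ZMod 2) • v) = ((1 : ZMod 2) ^ 2) • c v v)
  · intro v v' w
    simp only [sub_eq_add_neg, hneg]
    rw [hq (v + v') w, hq v v', hq v w, hq v' w, hA v v' w, hB w v v', add_comm w v,
      hA v w v', add_comm w v']
    abel_nf
    simp only [hZ2, hZ3, hZ4, zero_add, add_zero, smul_zero]
    try abel
  · intro v w w'
    simp only [sub_eq_add_neg, hneg]
    rw [hq v (w + w'), hq v w, hq v w', hB v w w', hA w w' v, add_comm w' v,
      hB w v w', add_comm w v]
    abel_nf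
    simp only [hZ2, hZ3, hZ4, zero_add, add_zero, smul_zero]
    try abel
  · intro α v w
    fin_cases α
    · exact (by simp [hnorm_left] : c ((0 : ZMod 2) • v + w) ((0 : ZMod 2) • v + w) - c ((0 : ZMod 2) • v) ((0 : ZMod 2) • v) - c w w = (0 : ZMod 2) • (c (v + w) (v + w) - c v v - c w w))
    · exact (by simp : c ((1 : ZMod 2) • v + w) ((1 : ZMod 2) • v + w) - c ((1 : ZMod 2) • v) ((1 : ZMod 2) • v) - c w w = (1 : ZMod 2) • (c (v + w) (v + w) - c v v - c w w))
  · intro α v w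
    fin_cases α
    · exact (by simp [hnorm_right] : c (v + (0 : ZMod 2) • w) (v + (0 : ZMod 2) • w) - c v v - c ((0 : ZMod 2) • w) ((0 : ZMod 2) • w) = (0 : ZMod 2) • (c (v + w) (v + w) - c v v - c w w))
    · exact (by simp : c (v + (1 : ZMod 2) • w) (v + (1 : ZMod 2) • w) - c v v - c ((1 : ZMod 2) • w) ((1 : ZMod 2) • w) = (1 : ZMod 2) • (c (v + w) (v + w) - c v v - c w w))
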